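/- Let P and Q be probability measures on a measurable space that are mutually absolutely continuous. Then ∫ (exp(|log(dP/dQ)|) − 1 − |log(dP/dQ)|) dQ ≤ χ²(Q‖P), where χ²(Q‖P) = ∫ (dQ/dP)² dP − 1 and both sides take values in [0,∞]. -/
import Mathlib

open MeasureTheory Real
open scoped ENNReal

noncomputable section

lemma key_real_ineq {x : ℝ} (hx : 0 < x) :
    Real.exp |Real.log x| - 1 - |Real.log x| + 2 ≤ x + x⁻¹ := by
  set t := Real.log x with ht
  have hx1 : x = Real.exp t := (Real.exp_log hx).symm
  have hx2 : x⁻¹ = Real.exp (-t) := by rw [hx1, ← Real.exp_neg]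
  have hsum : Real.exp |t| + Real.exp (-|t|) = Real.exp t + Real.exp (-t) := by
    rcases abs_cases t with ⟨h, _⟩ | ⟨h, _⟩ <;> rw [h]
    simp [neg_neg, add_comm]
  have h1 : (1 : ℝ) - |t| ≤ Real.exp (-|t|) := by
    have := Real.add_one_le_exp (-|t|)
    linarith
  rw [hx1]
  rw [hx1] at hx2
  linarith

lemma key_sq_ineq (x : ℝ≥0∞) : 2 * x ≤ x ^ 2 + 1 := by
  rcases eq_or_ne x ∞ with h | h
  · simp [h]
  rw [← ENNReal.ofReal_toReal h]
  set t := x.toReal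
  have ht : 0 ≤ t := ENNReal.toReal_nonneg
  calc 2 * ENNReal.ofReal t = ENNReal.ofReal (2 * t) := by
        rw [ENNReal.ofReal_mul (by norm_num : (0:ℝ) ≤ 2)]
        norm_num
    _ ≤ ENNReal.ofReal (t ^ 2 + 1) :=
        ENNReal.ofReal_le_ofReal (by nlinarith [sq_nonneg (t - 1)])
    _ = ENNReal.ofReal t ^ 2 + 1 := by
        rw [ENNReal.ofReal_add (by positivity) zero_le_one, ENNReal.ofReal_pow ht,
          ENNReal.ofReal_one]

/-- for mutually absolutely continuous probability measures `P`, `Q`,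
`∫ (e^{|log(dP/dQ)|} - 1 - |log(dP/dQ)|) dQ ≤ χ²(Q‖P)`, where
`χ²(Q‖P) = ∫ (dQ/dP)² dP - 1`; both sides are valued in `[0, ∞]`. -/
theorem stmt_17 {α : Type*} [MeasurableSpace α] (P Q : Measure α)
    [IsProbabilityMeasure P] [IsProbabilityMeasure Q]
    (hPQ : P ≪ Q) (hQP : Q ≪ P) :
    (∫⁻ a, ENNReal.ofReal
        (Real.exp |Real.log (P.rnDeriv Q a).toReal|
          - 1 - |Real.log (P.rnDeriv Q a).toReal|) ∂Q) ≤
      (∫⁻ a, (Q.rnDeriv P a) ^ 2 ∂P) - 1 := by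
  set r := P.rnDeriv Q with hr
  set s := Q.rnDeriv P with hs
  set f : α → ℝ≥0∞ := fun a ↦ ENNReal.ofReal
      (Real.exp |Real.log (r a).toReal| - 1 - |Real.log (r a).toReal|) with hf
  have hs_meas : Measurable s := Measure.measurable_rnDeriv Q P
  -- ∫ s² dP = ∫ s dQ = ∫ r⁻¹ dQ
  have hsq : ∫⁻ a, s a ^ 2 ∂P = ∫⁻ a, s a ∂Q := by
    rw [← lintegral_rnDeriv_mul hQP hs_meas.aemeasurable]
    congr 1; ext a; rw [sq]
  -- 1 ≤ ∫ s² dP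
  have h_one_le : 1 ≤ ∫⁻ a, s a ^ 2 ∂P := by
    have h2 : (2 : ℝ≥0∞) = ∫⁻ a, 2 * s a ∂P := by
      rw [lintegral_const_mul _ hs_meas, Measure.lintegral_rnDeriv hQP]
      simp
    have h3 : ∫⁻ a, 2 * s a ∂P ≤ ∫⁻ a, (s a ^ 2 + 1) ∂P :=
      lintegral_mono fun a ↦ key_sq_ineq (s a)
    rw [lintegral_add_right _ measurable_const, lintegral_one] at h3
    simp only [measure_univ, mul_one] at h3
    have : (2 : ℝ≥0∞) ≤ ∫⁻ a, s a ^ 2 ∂P + 1 := h2 ▸ h3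
    have h1 : (1 : ℝ≥0∞) + 1 ≤ ∫⁻ a, s a ^ 2 ∂P + 1 := by
      calc (1 : ℝ≥0∞) + 1 = 2 := by norm_num
      _ ≤ _ := this
    exact (ENNReal.add_le_add_iff_right ENNReal.one_ne_top).mp h1
  -- a.e. pointwise bound : f a + 2 ≤ r a + s a
  have h_ae : ∀ᵐ a ∂Q, f a + 2 ≤ r a + s a := by
    have h_pos : ∀ᵐ a ∂Q, 0 < r a := Measure.rnDeriv_pos' hQP
    have h_lt : ∀ᵐ a ∂Q, r a < ∞ := Measure.rnDeriv_lt_top P Q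
    have h_inv : (fun a ↦ (r a)⁻¹) =ᵐ[Q] s :=
      (Measure.inv_rnDeriv hPQ).filter_mono hQP.ae_le
    filter_upwards [h_pos, h_lt, h_inv] with a hpos hlt hinv
    have hx : 0 < (r a).toReal := ENNReal.toReal_pos hpos.ne' hlt.ne
    have key := key_real_ineq hx
    have hnn : 0 ≤ Real.exp |Real.log (r a).toReal| - 1 - |Real.log (r a).toReal| := by
      have := Real.add_one_le_exp |Real.log (r a).toReal|
      linarith
    have : f a + 2 = ENNReal.ofReal
        (Real.exp |Real.log (r a).toReal| - 1 - |Real.log (r a).toReal| + 2) := by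
      rw [hf]
      rw [ENNReal.ofReal_add hnn (by norm_num)]
      norm_num
    rw [this]
    calc ENNReal.ofReal (Real.exp |Real.log (r a).toReal| - 1
          - |Real.log (r a).toReal| + 2)
        ≤ ENNReal.ofReal ((r a).toReal + (r a).toReal⁻¹) := ENNReal.ofReal_le_ofReal key
      _ = ENNReal.ofReal (r a).toReal + ENNReal.ofReal (r a).toReal⁻¹ :=
          ENNReal.ofReal_add (le_of_lt hx) (le_of_lt (inv_pos.mpr hx))
      _ = r a + s a := by
          rw [ENNReal.ofReal_toReal hlt.ne, ← ENNReal.toReal_inv,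
            ENNReal.ofReal_toReal (by simp [hpos.ne']), ← hinv]
  -- measurability of f
  have hf_meas : Measurable f := by
    apply Measurable.ennreal_ofReal
    have h1 : Measurable fun a ↦ (r a).toReal :=
      (Measure.measurable_rnDeriv P Q).ennreal_toReal
    have h2 : Measurable fun a ↦ |Real.log (r a).toReal| :=
      (Real.measurable_log.comp h1).abs
    exact ((Real.measurable_exp.comp h2).sub measurable_const).sub h2
  -- integrate the bound
  have h_int : (∫⁻ a, f a ∂Q) + 2 ≤ (∫⁻ a, r a ∂Q) + ∫⁻ a, s a ∂Q := by
    calc (∫⁻ a, f a ∂Q) + 2 = ∫⁻ a, f a + 2 ∂Q := by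
          rw [lintegral_add_right _ measurable_const, lintegral_const]
          simp
      _ ≤ ∫⁻ a, r a + s a ∂Q := lintegral_mono_ae h_ae
      _ = (∫⁻ a, r a ∂Q) + ∫⁻ a, s a ∂Q :=
          lintegral_add_left (Measure.measurable_rnDeriv P Q) _
  have hrint : ∫⁻ a, r a ∂Q = 1 := by
    rw [hr, Measure.lintegral_rnDeriv hPQ]; simp
  rw [hrint, ← hsq] at h_int
  -- conclude
  apply ENNReal.le_sub_of_add_le_right ENNReal.one_ne_top
  have h1 : (∫⁻ a, f a ∂Q) + 1 + 1 ≤ (∫⁻ a, s a ^ 2 ∂P) + 1 := by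
    calc (∫⁻ a, f a ∂Q) + 1 + 1 = (∫⁻ a, f a ∂Q) + 2 := by ring
      _ ≤ 1 + ∫⁻ a, s a ^ 2 ∂P := h_int
      _ = (∫⁻ a, s a ^ 2 ∂P) + 1 := add_comm _ _
  exact (ENNReal.add_le_add_iff_right ENNReal.one_ne_top).mp h1
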